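/- If pi is a restriction of an André permutation of the second kind coming from a strictly binary increasing tree, and t is the left-oriented binary increasing tree with phi(t) = pi, then the set of right-to-left minima of pi equals the set of labels on the max-path of t. -/

import Mathlib

namespace Andre

/-- Plane binary trees with natural-number labels; `nil` is the empty tree. -/
inductive PTree where
  | nil : PTree
  | node (lab : ℕ) (l r : PTree) : PTree
deriving DecidableEq

namespace PTree

def size : PTree → ℕ
  | nil => 0
  | node _ l r => l.size + r.size + 1

def labels : PTree → Finset ℕ
  | nil => ∅
  | node a l r => insert a (l.labels ∪ r.labels)

def rootLabel : PTree → ℕ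
  | nil => 0
  | node a _ _ => a

def Increasing : PTree → Prop
  | nil => True
  | node a l r => (∀ b ∈ l.labels, a < b) ∧ (∀ b ∈ r.labels, a < b) ∧ l.Increasing ∧ r.Increasing

/-- `t` is a binary increasing tree on the label set {1,…,n}. -/
def IsBIT (n : ℕ) (t : PTree) : Prop :=
  t.Increasing ∧ t.size = n ∧ t.labels = Finset.Icc 1 n

/-- standard drawing (a1),(a2): an only child is on the right, and of two
children the one with the smaller label is on the left. -/
def StdOriented : PTree → Prop
  | nil => True
  | node _ l r => (r = nil → l = nil) ∧ (l ≠ nil → r ≠ nil → l.rootLabel < r.rootLabel)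
      ∧ l.StdOriented ∧ r.StdOriented

/-- left-oriented drawing: an only child is on the left, and of two
children the one with the smaller label is on the left. -/
def LeftOriented : PTree → Prop
  | nil => True
  | node _ l r => (l = nil → r = nil) ∧ (l ≠ nil → r ≠ nil → l.rootLabel < r.rootLabel)
      ∧ l.LeftOriented ∧ r.LeftOriented

/-- strictly binary: no node has outdegree one. -/
def Strict : PTree → Prop
  | nil => True
  | node _ l r => (l = nil ↔ r = nil) ∧ l.Strict ∧ r.Strict

/-- the collapsing procedure φ: repeatedly collapsing leaves into their parents
produces exactly the in-order reading word of the plane-drawn tree. -/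
def phi : PTree → List ℕ
  | nil => []
  | node a l r => phi l ++ a :: phi r

/-- `Sim t t'` means `t` and `t'` are two plane drawings of the same
(unordered) labelled tree. -/
inductive Sim : PTree → PTree → Prop
  | nil : Sim nil nil
  | node {a : ℕ} {l r l' r' : PTree} : Sim l l' → Sim r r' → Sim (node a l r) (node a l' r')
  | swap {a : ℕ} {l r l' r' : PTree} : Sim l r' → Sim r l' → Sim (node a l r) (node a l' r')

/-- number of nodes of outdegree 0. -/
def leaves : PTree → ℕ
  | nil => 0
  | node _ nil nil => 1
  | node _ l r => l.leaves + r.leaves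

/-- number of nodes of outdegree 1. -/
def deg1 : PTree → ℕ
  | nil => 0
  | node _ nil nil => 0
  | node _ nil r => 1 + r.deg1
  | node _ l nil => 1 + l.deg1
  | node _ l r => l.deg1 + r.deg1

/-- number of nodes of outdegree 2. -/
def deg2 : PTree → ℕ
  | nil => 0
  | node _ nil nil => 0
  | node _ nil r => r.deg2
  | node _ l nil => l.deg2
  | node _ l r => 1 + l.deg2 + r.deg2

/-- length of the min-path: start from the root and at each step move to the
child with the least label. -/
def minPathLen : PTree → ℕ
  | nil => 0
  | node _ nil nil => 1
  | node _ nil r => 1 + r.minPathLen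
  | node _ l nil => 1 + l.minPathLen
  | node _ l r => 1 + (if l.rootLabel ≤ r.rootLabel then l.minPathLen else r.minPathLen)

/-- set of labels on the min-path. -/
def minPathLabels : PTree → Finset ℕ
  | nil => ∅
  | node a nil nil => {a}
  | node a nil r => insert a r.minPathLabels
  | node a l nil => insert a l.minPathLabels
  | node a l r => insert a (if l.rootLabel ≤ r.rootLabel then l.minPathLabels else r.minPathLabels)

/-- length of the max-path: start from the root and, while the current node
has outdegree two, move to the child with the larger label. -/
def maxPathLen : PTree → ℕ
  | nil => 0
  | node _ nil _ => 1
  | node _ _ nil => 1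
  | node _ l r => 1 + (if l.rootLabel ≤ r.rootLabel then r.maxPathLen else l.maxPathLen)

/-- set of labels on the max-path. -/
def maxPathLabels : PTree → Finset ℕ
  | nil => ∅
  | node a nil _ => {a}
  | node a _ nil => {a}
  | node a l r => insert a (if l.rootLabel ≤ r.rootLabel then r.maxPathLabels else l.maxPathLabels)

/-- labels on the path from the root to the leftmost leaf. -/
def leftmostPathLabels : PTree → Finset ℕ
  | nil => ∅
  | node a nil nil => {a}
  | node a nil r => insert a r.leftmostPathLabels
  | node a l _ => insert a l.leftmostPathLabels

/-- labels of nodes reachable from the root by performing only right steps. -/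
def rightSpineLabels : PTree → Finset ℕ
  | nil => ∅
  | node a _ r => insert a r.rightSpineLabels

end PTree

/-- left-to-right minima of a word. -/
def leftToRightMinima (l : List ℕ) : Set ℕ :=
  {x | ∃ i : Fin l.length, l.get i = x ∧ ∀ j : Fin l.length, (j : ℕ) < (i : ℕ) → x < l.get j}

/-- right-to-left minima of a word. -/
def rightToLeftMinima (l : List ℕ) : Set ℕ :=
  {x | ∃ i : Fin l.length, l.get i = x ∧ ∀ j : Fin l.length, (i : ℕ) < (j : ℕ) → x < l.get j}

/-- a word is up-down (alternating): l₀ < l₁ > l₂ < l₃ > ⋯ . -/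
def IsUpDown (l : List ℕ) : Prop :=
  ∀ i : ℕ, i + 1 < l.length →
    (i % 2 = 0 → l.getD i 0 < l.getD (i + 1) 0) ∧ (i % 2 = 1 → l.getD (i + 1) 0 < l.getD i 0)

/-- the n-th Euler number: the number of up-down (alternating) permutations of {1,…,n}. -/
noncomputable def eulerNumber (n : ℕ) : ℕ :=
  {l : List ℕ | l.Perm (List.range' 1 n) ∧ IsUpDown l}.ncard

/-- the Euler numbers as indexed in the paper: e₁ = e₂ = e₃ = 1, e₄ = 2, e₅ = 5, e₆ = 16, … -/
noncomputable def paperEuler (n : ℕ) : ℕ := eulerNumber (n - 1)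

/-- the number of binary increasing trees of size n (each counted once, via its
unique standard drawing). -/
noncomputable def treeCount (n : ℕ) : ℕ :=
  {t : PTree | PTree.IsBIT n t ∧ PTree.StdOriented t}.ncard

/-- number of binary increasing trees of size n whose min-path has m nodes. -/
noncomputable def minPathCount (n m : ℕ) : ℕ :=
  {t : PTree | PTree.IsBIT n t ∧ PTree.StdOriented t ∧ t.minPathLen = m}.ncard

/-- number of binary increasing trees of size n whose max-path has r nodes. -/
noncomputable def maxPathCount (n r : ℕ) : ℕ :=
  {t : PTree | PTree.IsBIT n t ∧ PTree.StdOriented t ∧ t.maxPathLen = r}.ncard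

/-- σ is a restriction of π: σ is obtained from π by keeping only the entries 1,…,k. -/
def IsRestriction (σ π : List ℕ) : Prop :=
  ∃ k, 1 ≤ k ∧ k ≤ π.length ∧ σ = π.filter (fun x => decide (x ≤ k))

/-- σ ∈ res_n(Ã): σ has size n and is a restriction of an André permutation of
the second kind associated with a strictly binary increasing tree. -/
def InRes (n : ℕ) (σ : List ℕ) : Prop :=
  σ.length = n ∧
  ∃ (m : ℕ) (t : PTree), PTree.IsBIT m t ∧ PTree.StdOriented t ∧ PTree.Strict t ∧
    IsRestriction σ (PTree.phi t)

/-- outdegree of the node labelled v in t (0 if absent). -/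
def outdeg (v : ℕ) : PTree → ℕ
  | PTree.nil => 0
  | PTree.node a l r =>
      (if a = v then (if l = PTree.nil then 0 else 1) + (if r = PTree.nil then 0 else 1) else 0)
      + outdeg v l + outdeg v r

/-- the construction Θ: attach a new node labelled `newLab` as a child of the node
labelled `v`, redrawing in the standard way. -/
def addNode (v newLab : ℕ) : PTree → PTree
  | PTree.nil => PTree.nil
  | PTree.node a l r =>
      if a = v then
        match l, r with
        | PTree.nil, PTree.nil =>
            PTree.node a PTree.nil (PTree.node newLab PTree.nil PTree.nil)
        | PTree.nil, c => PTree.node a c (PTree.node newLab PTree.nil PTree.nil)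
        | c, PTree.nil => PTree.node a c (PTree.node newLab PTree.nil PTree.nil)
        | _, _ => PTree.node a l r
      else PTree.node a (addNode v newLab l) (addNode v newLab r)


lemma rtl_nil : rightToLeftMinima [] = ∅ := by
  ext x
  simp only [rightToLeftMinima, Set.mem_setOf_eq, Set.mem_empty_iff_false, iff_false]
  rintro ⟨i, _⟩
  exact absurd i.isLt (by simp)

lemma mem_rtl (l : List ℕ) (x : ℕ) :
    x ∈ rightToLeftMinima l ↔
      ∃ i, ∃ _ : i < l.length, l[i] = x ∧ ∀ j, ∀ _ : j < l.length, i < j → x < l[j] := by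
  constructor
  · rintro ⟨i, hget, hmin⟩
    exact ⟨i.val, i.isLt, hget, fun j h2 hij => hmin ⟨j, h2⟩ hij⟩
  · rintro ⟨i, h, hget, hmin⟩
    exact ⟨⟨i, h⟩, hget, fun j hij => hmin j.val j.isLt hij⟩

lemma rtl_split (l1 : List ℕ) (a : ℕ) (l2 : List ℕ)
    (h1 : ∀ x ∈ l1, a < x) (h2 : ∀ y ∈ l2, a < y) :
    rightToLeftMinima (l1 ++ a :: l2) = insert a (rightToLeftMinima l2) := by
  have hlen : (l1 ++ a :: l2).length = l1.length + l2.length + 1 := by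
    simp [List.length_append]; omega
  have hgetm : ∀ (j : ℕ) (hj : j < (l1 ++ a :: l2).length) (hj2 : l1.length < j),
      (l1 ++ a :: l2)[j] = l2[j - l1.length - 1]'(by rw [hlen] at hj; omega) := by
    intro j hj hj2
    have hle : l1.length ≤ j := le_of_lt hj2
    rw [List.getElem_append_right hle]
    obtain ⟨k, hk⟩ : ∃ k, j - l1.length = k + 1 := ⟨j - l1.length - 1, by omega⟩
    simp only [hk, List.getElem_cons_succ, Nat.add_sub_cancel]
  have hgeta : ∀ (hj : l1.length < (l1 ++ a :: l2).length),
      (l1 ++ a :: l2)[l1.length] = a := by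
    intro hj
    have hle : l1.length ≤ l1.length := le_refl _
    rw [List.getElem_append_right hle]
    simp
  ext x
  rw [mem_rtl]
  simp only [Set.mem_insert_iff]
  rw [mem_rtl]
  constructor
  · rintro ⟨i, hi, hget, hmin⟩
    have hiLt := hi
    rw [hlen] at hiLt
    rcases lt_trichotomy i l1.length with h | h | h
    · exfalso
      have hx : x ∈ l1 := by
        rw [List.getElem_append_left h] at hget
        rw [← hget]; exact List.getElem_mem _
      have hj : l1.length < (l1 ++ a :: l2).length := by rw [hlen]; omega
      have := hmin l1.length hj h
      rw [hgeta hj] at this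
      exact absurd (h1 x hx) (by omega)
    · left
      subst h
      rw [hgeta (by rw [hlen]; omega)] at hget
      exact hget.symm
    · right
      refine ⟨i - l1.length - 1, by omega, ?_, ?_⟩
      · rw [← hget]; exact (hgetm i hi h).symm
      · intro j hj hij
        have hjg : l1.length + 1 + j < (l1 ++ a :: l2).length := by rw [hlen]; omega
        have hmj := hmin (l1.length + 1 + j) hjg (by omega)
        rw [hgetm _ hjg (by omega)] at hmj
        convert hmj using 2
        omega
  · rintro (rfl | ⟨i, hi, hget, hmin⟩)
    · refine ⟨l1.length, by rw [hlen]; omega, hgeta (by rw [hlen]; omega), ?_⟩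
      intro j hj hij
      rw [hgetm _ hj hij]
      exact h2 _ (List.getElem_mem _)
    · refine ⟨l1.length + 1 + i, by rw [hlen]; omega, ?_, ?_⟩
      · rw [hgetm _ (by rw [hlen]; omega) (by omega), ← hget]
        congr 1
        omega
      · intro j hj hij
        have hjLt := hj
        rw [hlen] at hjLt
        have hmj := hmin (j - l1.length - 1) (by omega) (by omega)
        rw [hgetm _ hj (by omega)]
        exact hmj

lemma mem_phi (t : PTree) (x : ℕ) : x ∈ PTree.phi t ↔ x ∈ t.labels := by
  induction t with
  | nil => simp [PTree.phi, PTree.labels]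
  | node a l r ihl ihr =>
      simp [PTree.phi, PTree.labels, ihl, ihr]
      tauto

lemma key : ∀ t : PTree, t.Increasing → t.LeftOriented →
    rightToLeftMinima (PTree.phi t) = ↑t.maxPathLabels := by
  intro t
  induction t with
  | nil => intro _ _; simp [PTree.phi, PTree.maxPathLabels, rtl_nil]
  | node a l r ihl ihr =>
    intro hinc hlo
    obtain ⟨hal, har, hincl, hincr⟩ := hinc
    obtain ⟨honly, hlt, hlol, hlor⟩ := hlo
    have h1 : ∀ x ∈ PTree.phi l, a < x := fun x hx => hal x ((mem_phi l x).1 hx)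
    have h2 : ∀ y ∈ PTree.phi r, a < y := fun y hy => har y ((mem_phi r y).1 hy)
    cases r with
    | nil =>
      have : PTree.phi (PTree.node a l PTree.nil) = PTree.phi l ++ a :: [] := rfl
      rw [this, rtl_split _ _ _ h1 (by simp), rtl_nil]
      cases l <;> simp [PTree.maxPathLabels]
    | node c rl rr =>
      cases l with
      | nil => exact absurd (honly rfl) (by simp)
      | node b ll lr =>
        have hblt : b < c := hlt (by simp) (by simp)
        have : PTree.phi (PTree.node a (PTree.node b ll lr) (PTree.node c rl rr)) =
            PTree.phi (PTree.node b ll lr) ++ a :: PTree.phi (PTree.node c rl rr) := rfl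
        rw [this, rtl_split _ _ _ h1 h2, ihr hincr hlor]
        simp only [PTree.maxPathLabels, PTree.rootLabel]
        simp [le_of_lt hblt]

/-- for π ∈ res(Ã) with left-oriented tree t, φ(t) = π, the set of
right-to-left minima of π is the set of labels on the max-path of t. -/
theorem rtlMinima_eq_maxPathLabels (n : ℕ) (t : PTree) (π : List ℕ)
    (hπ : InRes n π) (ht : PTree.IsBIT n t) (hL : PTree.LeftOriented t)
    (hphi : PTree.phi t = π) :
    rightToLeftMinima π = ↑t.maxPathLabels := by
  rw [← hphi]
  exact key t ht.1 hL

end Andre
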